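/- Every basis vector e_Θ is an eigenvector of the squared angular momentum M² = M₁² + M₂² + M₃²: M² e_Θ = 0 if θ₁ = θ₂ = θ₃, and M² e_Θ = 2 e_Θ otherwise. Hence each state e_Θ carries angular momentum 0 or 1. -/

import Mathlib

open scoped BigOperators
open Finset

/-- Index set: triples Θ = (θ₁,θ₂,θ₃) with θᵢ ∈ {0,1}. -/
abbrev WIdx := Fin 3 → Fin 2

/-- The 8-dimensional state space V = EuclideanSpace ℂ ({0,1}³). -/
abbrev WV := EuclideanSpace ℂ WIdx

/-- Orthonormal basis vector e_Θ. -/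
noncomputable def eV (Θ : WIdx) : WV := EuclideanSpace.single Θ 1

/-- The basis (e_Θ)_Θ of V, as a `Basis`. -/
noncomputable def bV : Module.Basis WIdx ℂ WV := (EuclideanSpace.basisFun WIdx ℂ).toBasis

/-- q(Θ) = θ₁ + θ₂ + θ₃. -/
def qv (Θ : WIdx) : ℕ := ∑ j, (Θ j : ℕ)

/-- Sign factor (−1)^(θ₁ + ⋯ + θ_{i−1}). -/
def sgnBelow (i : Fin 3) (Θ : WIdx) : ℂ :=
  (-1 : ℂ) ^ (∑ j : Fin 3, if (j : ℕ) < (i : ℕ) then (Θ j : ℕ) else 0)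

/-- Sign factor (−1)^(θ₁ + ⋯ + θ_i). -/
def sgnUpTo (i : Fin 3) (Θ : WIdx) : ℂ :=
  (-1 : ℂ) ^ (∑ j : Fin 3, if (j : ℕ) ≤ (i : ℕ) then (Θ j : ℕ) else 0)

/-- A_i⁻ e_Θ = θ_i (−1)^(θ₁+⋯+θ_{i−1}) √(p−q(Θ)+1) e_{Θ[θ_i↦0]}. -/
noncomputable def Aminus (p : ℕ) (i : Fin 3) : WV →ₗ[ℂ] WV :=
  bV.constr ℂ fun Θ =>
    (((Θ i : ℕ) : ℂ) * sgnBelow i Θ *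
      ((Real.sqrt ((p : ℝ) - (qv Θ : ℝ) + 1) : ℝ) : ℂ)) • eV (Function.update Θ i 0)

/-- A_i⁺ e_Θ = (1−θ_i) (−1)^(θ₁+⋯+θ_{i−1}) √(p−q(Θ)) e_{Θ[θ_i↦1]}. -/
noncomputable def Aplus (p : ℕ) (i : Fin 3) : WV →ₗ[ℂ] WV :=
  bV.constr ℂ fun Θ =>
    (((1 : ℂ) - ((Θ i : ℕ) : ℂ)) * sgnBelow i Θ *
      ((Real.sqrt ((p : ℝ) - (qv Θ : ℝ)) : ℝ) : ℂ)) • eV (Function.update Θ i 1)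

/-- Anticommutator {X,Y} = XY + YX. -/
noncomputable def acommOp (X Y : WV →ₗ[ℂ] WV) : WV →ₗ[ℂ] WV := X ∘ₗ Y + Y ∘ₗ X

/-- Commutator [X,Y] = XY − YX. -/
noncomputable def commOp (X Y : WV →ₗ[ℂ] WV) : WV →ₗ[ℂ] WV := X ∘ₗ Y - Y ∘ₗ X

/-- Dimensionless Hamiltonian ĥ = Σᵢ {A_i⁺, A_i⁻}. -/
noncomputable def hOp (p : ℕ) : WV →ₗ[ℂ] WV := ∑ i, acommOp (Aplus p i) (Aminus p i)

/-- Position operator r̂_k(t) = e^{−it} A_k⁺ + e^{it} A_k⁻. -/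
noncomputable def rOp (p : ℕ) (k : Fin 3) (t : ℝ) : WV →ₗ[ℂ] WV :=
  Complex.exp (-(t : ℂ) * Complex.I) • Aplus p k +
    Complex.exp ((t : ℂ) * Complex.I) • Aminus p k

/-- Momentum operator p̂_k(t) = −i (e^{−it} A_k⁺ − e^{it} A_k⁻). -/
noncomputable def pOp (p : ℕ) (k : Fin 3) (t : ℝ) : WV →ₗ[ℂ] WV :=
  (-Complex.I) • (Complex.exp (-(t : ℂ) * Complex.I) • Aplus p k -
    Complex.exp ((t : ℂ) * Complex.I) • Aminus p k)

/-- Levi-Civita symbol ε_{jkl} with ε_{123} = 1 (indices 0,1,2 here). -/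
def eps (j k l : Fin 3) : ℂ :=
  if (j, k, l) = (0, 1, 2) ∨ (j, k, l) = (1, 2, 0) ∨ (j, k, l) = (2, 0, 1) then 1
  else if (j, k, l) = (2, 1, 0) ∨ (j, k, l) = (1, 0, 2) ∨ (j, k, l) = (0, 2, 1) then -1
  else 0

/-- Angular momentum M_j = −i Σ_{k,l} ε_{jkl} {A_k⁺, A_l⁻}. -/
noncomputable def Mop (p : ℕ) (j : Fin 3) : WV →ₗ[ℂ] WV :=
  (-Complex.I) • ∑ k, ∑ l, eps j k l • acommOp (Aplus p k) (Aminus p l)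

/-- Eigenvectors v_k(Θ,t) of the position operator r̂_k(t). -/
noncomputable def vVec (k : Fin 3) (t : ℝ) (Θ : WIdx) : WV :=
  (((Real.sqrt 2)⁻¹ : ℝ) : ℂ) •
    (eV (Function.update Θ k 0) +
      (sgnUpTo k Θ * Complex.exp (-(t : ℂ) * Complex.I)) • eV (Function.update Θ k 1))

/-- Eigenvectors ṽ_k(Θ,t) of the momentum operator p̂_k(t). -/
noncomputable def vTilde (k : Fin 3) (t : ℝ) (Θ : WIdx) : WV :=
  (((Real.sqrt 2)⁻¹ : ℝ) : ℂ) •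
    (eV (Function.update Θ k 0) -
      (Complex.I * sgnUpTo k Θ * Complex.exp (-(t : ℂ) * Complex.I)) • eV (Function.update Θ k 1))

/-- The non-stationary state z = (1/√2)(e_{(0,0,0)} + e_{(0,0,1)}). -/
noncomputable def zState : WV :=
  (((Real.sqrt 2)⁻¹ : ℝ) : ℂ) • (eV ![0, 0, 0] + eV ![0, 0, 1])

/-- The state x₁ = (1/√2)(e_{(0,1,0)} + e_{(1,1,0)}). -/
noncomputable def x1State : WV :=
  (((Real.sqrt 2)⁻¹ : ℝ) : ℂ) • (eV ![0, 1, 0] + eV ![1, 1, 0])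

local notation "⟪" x ", " y "⟫" => @inner ℂ _ _ x y

lemma bV_eq (Θ : WIdx) : bV Θ = eV Θ := by
  simp [bV, eV, EuclideanSpace.basisFun_apply]

lemma Aminus_apply (p : ℕ) (i : Fin 3) (Θ : WIdx) :
    Aminus p i (eV Θ) =
    (((Θ i : ℕ) : ℂ) * sgnBelow i Θ *
      ((Real.sqrt ((p : ℝ) - (qv Θ : ℝ) + 1) : ℝ) : ℂ)) • eV (Function.update Θ i 0) := by
  rw [← bV_eq, Aminus, Module.Basis.constr_basis]

lemma Aplus_apply (p : ℕ) (i : Fin 3) (Θ : WIdx) :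
    Aplus p i (eV Θ) =
    (((1 : ℂ) - ((Θ i : ℕ) : ℂ)) * sgnBelow i Θ *
      ((Real.sqrt ((p : ℝ) - (qv Θ : ℝ)) : ℝ) : ℂ)) • eV (Function.update Θ i 1) := by
  rw [← bV_eq, Aplus, Module.Basis.constr_basis]

@[simp] lemma upd0 (a b c x : Fin 2) : Function.update ![a,b,c] (0 : Fin 3) x = ![x,b,c] := by
  funext j; fin_cases j <;> simp [Function.update]
@[simp] lemma upd1 (a b c x : Fin 2) : Function.update ![a,b,c] (1 : Fin 3) x = ![a,x,c] := by
  funext j; fin_cases j <;> simp [Function.update]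
@[simp] lemma upd2 (a b c x : Fin 2) : Function.update ![a,b,c] (2 : Fin 3) x = ![a,b,x] := by
  funext j; fin_cases j <;> simp [Function.update]

lemma Am_0_0 (p : ℕ) : Aminus p 0 (eV ![0,0,0]) = 0 := by
  rw [Aminus_apply]; norm_num [qv, sgnBelow, Fin.sum_univ_three, Matrix.cons_val_two, Matrix.tail_cons, Matrix.head_cons]

lemma Am_0_1 (p : ℕ) : Aminus p 0 (eV ![1,0,0]) = (((Real.sqrt ((p : ℝ) - 1 + 1) : ℝ) : ℂ)) • eV ![0,0,0] := by
  rw [Aminus_apply]; norm_num [qv, sgnBelow, Fin.sum_univ_three, Matrix.cons_val_two, Matrix.tail_cons, Matrix.head_cons]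

lemma Am_0_2 (p : ℕ) : Aminus p 0 (eV ![0,1,0]) = 0 := by
  rw [Aminus_apply]; norm_num [qv, sgnBelow, Fin.sum_univ_three, Matrix.cons_val_two, Matrix.tail_cons, Matrix.head_cons]

lemma Am_0_3 (p : ℕ) : Aminus p 0 (eV ![1,1,0]) = (((Real.sqrt ((p : ℝ) - 2 + 1) : ℝ) : ℂ)) • eV ![0,1,0] := by
  rw [Aminus_apply]; norm_num [qv, sgnBelow, Fin.sum_univ_three, Matrix.cons_val_two, Matrix.tail_cons, Matrix.head_cons]

lemma Am_0_4 (p : ℕ) : Aminus p 0 (eV ![0,0,1]) = 0 := by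
  rw [Aminus_apply]; norm_num [qv, sgnBelow, Fin.sum_univ_three, Matrix.cons_val_two, Matrix.tail_cons, Matrix.head_cons]

lemma Am_0_5 (p : ℕ) : Aminus p 0 (eV ![1,0,1]) = (((Real.sqrt ((p : ℝ) - 2 + 1) : ℝ) : ℂ)) • eV ![0,0,1] := by
  rw [Aminus_apply]; norm_num [qv, sgnBelow, Fin.sum_univ_three, Matrix.cons_val_two, Matrix.tail_cons, Matrix.head_cons]

lemma Am_0_6 (p : ℕ) : Aminus p 0 (eV ![0,1,1]) = 0 := by
  rw [Aminus_apply]; norm_num [qv, sgnBelow, Fin.sum_univ_three, Matrix.cons_val_two, Matrix.tail_cons, Matrix.head_cons]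

lemma Am_0_7 (p : ℕ) : Aminus p 0 (eV ![1,1,1]) = (((Real.sqrt ((p : ℝ) - 3 + 1) : ℝ) : ℂ)) • eV ![0,1,1] := by
  rw [Aminus_apply]; norm_num [qv, sgnBelow, Fin.sum_univ_three, Matrix.cons_val_two, Matrix.tail_cons, Matrix.head_cons]

lemma Am_1_0 (p : ℕ) : Aminus p 1 (eV ![0,0,0]) = 0 := by
  rw [Aminus_apply]; norm_num [qv, sgnBelow, Fin.sum_univ_three, Matrix.cons_val_two, Matrix.tail_cons, Matrix.head_cons]

lemma Am_1_1 (p : ℕ) : Aminus p 1 (eV ![1,0,0]) = 0 := by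
  rw [Aminus_apply]; norm_num [qv, sgnBelow, Fin.sum_univ_three, Matrix.cons_val_two, Matrix.tail_cons, Matrix.head_cons]

lemma Am_1_2 (p : ℕ) : Aminus p 1 (eV ![0,1,0]) = (((Real.sqrt ((p : ℝ) - 1 + 1) : ℝ) : ℂ)) • eV ![0,0,0] := by
  rw [Aminus_apply]; norm_num [qv, sgnBelow, Fin.sum_univ_three, Matrix.cons_val_two, Matrix.tail_cons, Matrix.head_cons]

lemma Am_1_3 (p : ℕ) : Aminus p 1 (eV ![1,1,0]) = (-((Real.sqrt ((p : ℝ) - 2 + 1) : ℝ) : ℂ)) • eV ![1,0,0] := by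
  rw [Aminus_apply]; norm_num [qv, sgnBelow, Fin.sum_univ_three, Matrix.cons_val_two, Matrix.tail_cons, Matrix.head_cons]

lemma Am_1_4 (p : ℕ) : Aminus p 1 (eV ![0,0,1]) = 0 := by
  rw [Aminus_apply]; norm_num [qv, sgnBelow, Fin.sum_univ_three, Matrix.cons_val_two, Matrix.tail_cons, Matrix.head_cons]

lemma Am_1_5 (p : ℕ) : Aminus p 1 (eV ![1,0,1]) = 0 := by
  rw [Aminus_apply]; norm_num [qv, sgnBelow, Fin.sum_univ_three, Matrix.cons_val_two, Matrix.tail_cons, Matrix.head_cons]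

lemma Am_1_6 (p : ℕ) : Aminus p 1 (eV ![0,1,1]) = (((Real.sqrt ((p : ℝ) - 2 + 1) : ℝ) : ℂ)) • eV ![0,0,1] := by
  rw [Aminus_apply]; norm_num [qv, sgnBelow, Fin.sum_univ_three, Matrix.cons_val_two, Matrix.tail_cons, Matrix.head_cons]

lemma Am_1_7 (p : ℕ) : Aminus p 1 (eV ![1,1,1]) = (-((Real.sqrt ((p : ℝ) - 3 + 1) : ℝ) : ℂ)) • eV ![1,0,1] := by
  rw [Aminus_apply]; norm_num [qv, sgnBelow, Fin.sum_univ_three, Matrix.cons_val_two, Matrix.tail_cons, Matrix.head_cons]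

lemma Am_2_0 (p : ℕ) : Aminus p 2 (eV ![0,0,0]) = 0 := by
  rw [Aminus_apply]; norm_num [qv, sgnBelow, Fin.sum_univ_three, Matrix.cons_val_two, Matrix.tail_cons, Matrix.head_cons]

lemma Am_2_1 (p : ℕ) : Aminus p 2 (eV ![1,0,0]) = 0 := by
  rw [Aminus_apply]; norm_num [qv, sgnBelow, Fin.sum_univ_three, Matrix.cons_val_two, Matrix.tail_cons, Matrix.head_cons]

lemma Am_2_2 (p : ℕ) : Aminus p 2 (eV ![0,1,0]) = 0 := by
  rw [Aminus_apply]; norm_num [qv, sgnBelow, Fin.sum_univ_three, Matrix.cons_val_two, Matrix.tail_cons, Matrix.head_cons]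

lemma Am_2_3 (p : ℕ) : Aminus p 2 (eV ![1,1,0]) = 0 := by
  rw [Aminus_apply]; norm_num [qv, sgnBelow, Fin.sum_univ_three, Matrix.cons_val_two, Matrix.tail_cons, Matrix.head_cons]

lemma Am_2_4 (p : ℕ) : Aminus p 2 (eV ![0,0,1]) = (((Real.sqrt ((p : ℝ) - 1 + 1) : ℝ) : ℂ)) • eV ![0,0,0] := by
  rw [Aminus_apply]; norm_num [qv, sgnBelow, Fin.sum_univ_three, Matrix.cons_val_two, Matrix.tail_cons, Matrix.head_cons]

lemma Am_2_5 (p : ℕ) : Aminus p 2 (eV ![1,0,1]) = (-((Real.sqrt ((p : ℝ) - 2 + 1) : ℝ) : ℂ)) • eV ![1,0,0] := by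
  rw [Aminus_apply]; norm_num [qv, sgnBelow, Fin.sum_univ_three, Matrix.cons_val_two, Matrix.tail_cons, Matrix.head_cons]

lemma Am_2_6 (p : ℕ) : Aminus p 2 (eV ![0,1,1]) = (-((Real.sqrt ((p : ℝ) - 2 + 1) : ℝ) : ℂ)) • eV ![0,1,0] := by
  rw [Aminus_apply]; norm_num [qv, sgnBelow, Fin.sum_univ_three, Matrix.cons_val_two, Matrix.tail_cons, Matrix.head_cons]

lemma Am_2_7 (p : ℕ) : Aminus p 2 (eV ![1,1,1]) = (((Real.sqrt ((p : ℝ) - 3 + 1) : ℝ) : ℂ)) • eV ![1,1,0] := by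
  rw [Aminus_apply]; norm_num [qv, sgnBelow, Fin.sum_univ_three, Matrix.cons_val_two, Matrix.tail_cons, Matrix.head_cons]

lemma Ap_0_0 (p : ℕ) : Aplus p 0 (eV ![0,0,0]) = (((Real.sqrt ((p : ℝ) - 0) : ℝ) : ℂ)) • eV ![1,0,0] := by
  rw [Aplus_apply]; norm_num [qv, sgnBelow, Fin.sum_univ_three, Matrix.cons_val_two, Matrix.tail_cons, Matrix.head_cons]

lemma Ap_0_1 (p : ℕ) : Aplus p 0 (eV ![1,0,0]) = 0 := by
  rw [Aplus_apply]; norm_num [qv, sgnBelow, Fin.sum_univ_three, Matrix.cons_val_two, Matrix.tail_cons, Matrix.head_cons]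

lemma Ap_0_2 (p : ℕ) : Aplus p 0 (eV ![0,1,0]) = (((Real.sqrt ((p : ℝ) - 1) : ℝ) : ℂ)) • eV ![1,1,0] := by
  rw [Aplus_apply]; norm_num [qv, sgnBelow, Fin.sum_univ_three, Matrix.cons_val_two, Matrix.tail_cons, Matrix.head_cons]

lemma Ap_0_3 (p : ℕ) : Aplus p 0 (eV ![1,1,0]) = 0 := by
  rw [Aplus_apply]; norm_num [qv, sgnBelow, Fin.sum_univ_three, Matrix.cons_val_two, Matrix.tail_cons, Matrix.head_cons]

lemma Ap_0_4 (p : ℕ) : Aplus p 0 (eV ![0,0,1]) = (((Real.sqrt ((p : ℝ) - 1) : ℝ) : ℂ)) • eV ![1,0,1] := by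
  rw [Aplus_apply]; norm_num [qv, sgnBelow, Fin.sum_univ_three, Matrix.cons_val_two, Matrix.tail_cons, Matrix.head_cons]

lemma Ap_0_5 (p : ℕ) : Aplus p 0 (eV ![1,0,1]) = 0 := by
  rw [Aplus_apply]; norm_num [qv, sgnBelow, Fin.sum_univ_three, Matrix.cons_val_two, Matrix.tail_cons, Matrix.head_cons]

lemma Ap_0_6 (p : ℕ) : Aplus p 0 (eV ![0,1,1]) = (((Real.sqrt ((p : ℝ) - 2) : ℝ) : ℂ)) • eV ![1,1,1] := by
  rw [Aplus_apply]; norm_num [qv, sgnBelow, Fin.sum_univ_three, Matrix.cons_val_two, Matrix.tail_cons, Matrix.head_cons]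

lemma Ap_0_7 (p : ℕ) : Aplus p 0 (eV ![1,1,1]) = 0 := by
  rw [Aplus_apply]; norm_num [qv, sgnBelow, Fin.sum_univ_three, Matrix.cons_val_two, Matrix.tail_cons, Matrix.head_cons]

lemma Ap_1_0 (p : ℕ) : Aplus p 1 (eV ![0,0,0]) = (((Real.sqrt ((p : ℝ) - 0) : ℝ) : ℂ)) • eV ![0,1,0] := by
  rw [Aplus_apply]; norm_num [qv, sgnBelow, Fin.sum_univ_three, Matrix.cons_val_two, Matrix.tail_cons, Matrix.head_cons]

lemma Ap_1_1 (p : ℕ) : Aplus p 1 (eV ![1,0,0]) = (-((Real.sqrt ((p : ℝ) - 1) : ℝ) : ℂ)) • eV ![1,1,0] := by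
  rw [Aplus_apply]; norm_num [qv, sgnBelow, Fin.sum_univ_three, Matrix.cons_val_two, Matrix.tail_cons, Matrix.head_cons]

lemma Ap_1_2 (p : ℕ) : Aplus p 1 (eV ![0,1,0]) = 0 := by
  rw [Aplus_apply]; norm_num [qv, sgnBelow, Fin.sum_univ_three, Matrix.cons_val_two, Matrix.tail_cons, Matrix.head_cons]

lemma Ap_1_3 (p : ℕ) : Aplus p 1 (eV ![1,1,0]) = 0 := by
  rw [Aplus_apply]; norm_num [qv, sgnBelow, Fin.sum_univ_three, Matrix.cons_val_two, Matrix.tail_cons, Matrix.head_cons]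

lemma Ap_1_4 (p : ℕ) : Aplus p 1 (eV ![0,0,1]) = (((Real.sqrt ((p : ℝ) - 1) : ℝ) : ℂ)) • eV ![0,1,1] := by
  rw [Aplus_apply]; norm_num [qv, sgnBelow, Fin.sum_univ_three, Matrix.cons_val_two, Matrix.tail_cons, Matrix.head_cons]

lemma Ap_1_5 (p : ℕ) : Aplus p 1 (eV ![1,0,1]) = (-((Real.sqrt ((p : ℝ) - 2) : ℝ) : ℂ)) • eV ![1,1,1] := by
  rw [Aplus_apply]; norm_num [qv, sgnBelow, Fin.sum_univ_three, Matrix.cons_val_two, Matrix.tail_cons, Matrix.head_cons]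

lemma Ap_1_6 (p : ℕ) : Aplus p 1 (eV ![0,1,1]) = 0 := by
  rw [Aplus_apply]; norm_num [qv, sgnBelow, Fin.sum_univ_three, Matrix.cons_val_two, Matrix.tail_cons, Matrix.head_cons]

lemma Ap_1_7 (p : ℕ) : Aplus p 1 (eV ![1,1,1]) = 0 := by
  rw [Aplus_apply]; norm_num [qv, sgnBelow, Fin.sum_univ_three, Matrix.cons_val_two, Matrix.tail_cons, Matrix.head_cons]

lemma Ap_2_0 (p : ℕ) : Aplus p 2 (eV ![0,0,0]) = (((Real.sqrt ((p : ℝ) - 0) : ℝ) : ℂ)) • eV ![0,0,1] := by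
  rw [Aplus_apply]; norm_num [qv, sgnBelow, Fin.sum_univ_three, Matrix.cons_val_two, Matrix.tail_cons, Matrix.head_cons]

lemma Ap_2_1 (p : ℕ) : Aplus p 2 (eV ![1,0,0]) = (-((Real.sqrt ((p : ℝ) - 1) : ℝ) : ℂ)) • eV ![1,0,1] := by
  rw [Aplus_apply]; norm_num [qv, sgnBelow, Fin.sum_univ_three, Matrix.cons_val_two, Matrix.tail_cons, Matrix.head_cons]

lemma Ap_2_2 (p : ℕ) : Aplus p 2 (eV ![0,1,0]) = (-((Real.sqrt ((p : ℝ) - 1) : ℝ) : ℂ)) • eV ![0,1,1] := by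
  rw [Aplus_apply]; norm_num [qv, sgnBelow, Fin.sum_univ_three, Matrix.cons_val_two, Matrix.tail_cons, Matrix.head_cons]

lemma Ap_2_3 (p : ℕ) : Aplus p 2 (eV ![1,1,0]) = (((Real.sqrt ((p : ℝ) - 2) : ℝ) : ℂ)) • eV ![1,1,1] := by
  rw [Aplus_apply]; norm_num [qv, sgnBelow, Fin.sum_univ_three, Matrix.cons_val_two, Matrix.tail_cons, Matrix.head_cons]

lemma Ap_2_4 (p : ℕ) : Aplus p 2 (eV ![0,0,1]) = 0 := by
  rw [Aplus_apply]; norm_num [qv, sgnBelow, Fin.sum_univ_three, Matrix.cons_val_two, Matrix.tail_cons, Matrix.head_cons]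

lemma Ap_2_5 (p : ℕ) : Aplus p 2 (eV ![1,0,1]) = 0 := by
  rw [Aplus_apply]; norm_num [qv, sgnBelow, Fin.sum_univ_three, Matrix.cons_val_two, Matrix.tail_cons, Matrix.head_cons]

lemma Ap_2_6 (p : ℕ) : Aplus p 2 (eV ![0,1,1]) = 0 := by
  rw [Aplus_apply]; norm_num [qv, sgnBelow, Fin.sum_univ_three, Matrix.cons_val_two, Matrix.tail_cons, Matrix.head_cons]

lemma Ap_2_7 (p : ℕ) : Aplus p 2 (eV ![1,1,1]) = 0 := by
  rw [Aplus_apply]; norm_num [qv, sgnBelow, Fin.sum_univ_three, Matrix.cons_val_two, Matrix.tail_cons, Matrix.head_cons]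

lemma eps_000 : eps 0 0 0 = 0 := by norm_num [eps, Prod.ext_iff, Fin.ext_iff]

lemma eps_001 : eps 0 0 1 = 0 := by norm_num [eps, Prod.ext_iff, Fin.ext_iff]

lemma eps_002 : eps 0 0 2 = 0 := by norm_num [eps, Prod.ext_iff, Fin.ext_iff]

lemma eps_010 : eps 0 1 0 = 0 := by norm_num [eps, Prod.ext_iff, Fin.ext_iff]

lemma eps_011 : eps 0 1 1 = 0 := by norm_num [eps, Prod.ext_iff, Fin.ext_iff]

lemma eps_012 : eps 0 1 2 = 1 := by norm_num [eps, Prod.ext_iff, Fin.ext_iff]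

lemma eps_020 : eps 0 2 0 = 0 := by norm_num [eps, Prod.ext_iff, Fin.ext_iff]

lemma eps_021 : eps 0 2 1 = -1 := by norm_num [eps, Prod.ext_iff, Fin.ext_iff]

lemma eps_022 : eps 0 2 2 = 0 := by norm_num [eps, Prod.ext_iff, Fin.ext_iff]

lemma eps_100 : eps 1 0 0 = 0 := by norm_num [eps, Prod.ext_iff, Fin.ext_iff]

lemma eps_101 : eps 1 0 1 = 0 := by norm_num [eps, Prod.ext_iff, Fin.ext_iff]

lemma eps_102 : eps 1 0 2 = -1 := by norm_num [eps, Prod.ext_iff, Fin.ext_iff]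

lemma eps_110 : eps 1 1 0 = 0 := by norm_num [eps, Prod.ext_iff, Fin.ext_iff]

lemma eps_111 : eps 1 1 1 = 0 := by norm_num [eps, Prod.ext_iff, Fin.ext_iff]

lemma eps_112 : eps 1 1 2 = 0 := by norm_num [eps, Prod.ext_iff, Fin.ext_iff]

lemma eps_120 : eps 1 2 0 = 1 := by norm_num [eps, Prod.ext_iff, Fin.ext_iff]

lemma eps_121 : eps 1 2 1 = 0 := by norm_num [eps, Prod.ext_iff, Fin.ext_iff]

lemma eps_122 : eps 1 2 2 = 0 := by norm_num [eps, Prod.ext_iff, Fin.ext_iff]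

lemma eps_200 : eps 2 0 0 = 0 := by norm_num [eps, Prod.ext_iff, Fin.ext_iff]

lemma eps_201 : eps 2 0 1 = 1 := by norm_num [eps, Prod.ext_iff, Fin.ext_iff]

lemma eps_202 : eps 2 0 2 = 0 := by norm_num [eps, Prod.ext_iff, Fin.ext_iff]

lemma eps_210 : eps 2 1 0 = -1 := by norm_num [eps, Prod.ext_iff, Fin.ext_iff]

lemma eps_211 : eps 2 1 1 = 0 := by norm_num [eps, Prod.ext_iff, Fin.ext_iff]

lemma eps_212 : eps 2 1 2 = 0 := by norm_num [eps, Prod.ext_iff, Fin.ext_iff]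

lemma eps_220 : eps 2 2 0 = 0 := by norm_num [eps, Prod.ext_iff, Fin.ext_iff]

lemma eps_221 : eps 2 2 1 = 0 := by norm_num [eps, Prod.ext_iff, Fin.ext_iff]

lemma eps_222 : eps 2 2 2 = 0 := by norm_num [eps, Prod.ext_iff, Fin.ext_iff]

set_option maxHeartbeats 4000000 in
/-- M² e_Θ = 0 if θ₁ = θ₂ = θ₃, and M² e_Θ = 2 e_Θ otherwise. -/
theorem stmt10 (p : ℕ) (hp : 3 ≤ p) (Θ : WIdx) :
    (∑ j : Fin 3, Mop p j ∘ₗ Mop p j) (eV Θ) =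
      (if Θ 0 = Θ 1 ∧ Θ 1 = Θ 2 then (0 : ℂ) else 2) • eV Θ := by
  have hp3 : (3:ℝ) ≤ (p:ℝ) := by exact_mod_cast hp
  have e0 : (p:ℝ) - 0 = (p:ℝ) := by ring
  have e1 : (p:ℝ) - 1 + 1 = (p:ℝ) := by ring
  have e2 : (p:ℝ) - 2 + 1 = (p:ℝ) - 1 := by ring
  have e3 : (p:ℝ) - 3 + 1 = (p:ℝ) - 2 := by ring
  have hs : ∀ x:ℝ, 0 ≤ x → ((Real.sqrt x : ℝ):ℂ) * ((Real.sqrt x : ℝ):ℂ) = ((x:ℝ):ℂ) := by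
    intro x hx
    rw [← Complex.ofReal_mul, Real.mul_self_sqrt hx]
  have k0 := hs ((p:ℝ)) (by linarith)
  have k1 := hs ((p:ℝ)-1) (by linarith)
  have k2 := hs ((p:ℝ)-2) (by linarith)
  obtain ⟨a, b, c, rfl⟩ : ∃ a b c, Θ = ![a, b, c] :=
    ⟨Θ 0, Θ 1, Θ 2, by funext j; fin_cases j <;> rfl⟩
  fin_cases a <;> fin_cases b <;> fin_cases c <;>
    (norm_num [Fin.ext_iff, Matrix.cons_val_two, Matrix.tail_cons, Matrix.head_cons]
     simp only [LinearMap.sum_apply, LinearMap.comp_apply, Mop, LinearMap.smul_apply,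
       Fin.sum_univ_three, LinearMap.add_apply, acommOp, map_add, map_smul, map_neg, map_zero,
       smul_zero, smul_add, smul_neg, smul_smul, eps_000, eps_001, eps_002, eps_010, eps_011, eps_012, eps_020, eps_021, eps_022, eps_100, eps_101, eps_102, eps_110, eps_111, eps_112, eps_120, eps_121, eps_122, eps_200, eps_201, eps_202, eps_210, eps_211, eps_212, eps_220, eps_221, eps_222,
       zero_smul, one_smul, neg_smul, neg_neg, add_zero, zero_add, neg_zero, mul_zero, zero_mul,
       Am_0_0, Am_0_1, Am_0_2, Am_0_3, Am_0_4, Am_0_5, Am_0_6, Am_0_7, Am_1_0, Am_1_1, Am_1_2, Am_1_3, Am_1_4, Am_1_5, Am_1_6, Am_1_7, Am_2_0, Am_2_1, Am_2_2, Am_2_3, Am_2_4, Am_2_5, Am_2_6, Am_2_7, Ap_0_0, Ap_0_1, Ap_0_2, Ap_0_3, Ap_0_4, Ap_0_5, Ap_0_6, Ap_0_7, Ap_1_0, Ap_1_1, Ap_1_2, Ap_1_3, Ap_1_4, Ap_1_5, Ap_1_6, Ap_1_7, Ap_2_0, Ap_2_1, Ap_2_2, Ap_2_3, Ap_2_4,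 Ap_2_5, Ap_2_6, Ap_2_7]
     try simp only [e0, e1, e2, e3, k0, k1, k2]
     try match_scalars <;> (ring_nf; simp only [Complex.I_sq]; push_cast; ring))
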